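/- Let X and Y be real random variables on a probability space (Ω, F, P) such that the law of the pair (X, Y) on ℝ² is a centered Gaussian measure and Var(X) > 0, and let q > 0. Then E[ Y · sgn(X) · |X|^q ] = ( Cov(X, Y) / Var(X) ) · E[ |X|^{q+1} ]. -/

import Mathlib

open Finset MeasureTheory ProbabilityTheory

namespace GaussReg

open Real Set Filter

lemma measurable_rsign : Measurable Real.sign := by
  have : Real.sign = fun r : ℝ => if r < 0 then (-1:ℝ) else if 0 < r then 1 else 0 := by
    funext r; rfl
  rw [this]
  exact Measurable.ite (measurableSet_lt measurable_id measurable_const) measurable_const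
    (Measurable.ite (measurableSet_lt measurable_const measurable_id) measurable_const
      measurable_const)

lemma abs_rsign_le (r : ℝ) : |Real.sign r| ≤ 1 := by
  rcases Real.sign_apply_eq r with h | h | h <;> rw [h] <;> norm_num

lemma integrable_comp_abs {f : ℝ → ℝ} (hf : Integrable f) :
    Integrable (fun x => f |x|) := by
  have hIoi : IntegrableOn (fun x => f |x|) (Ioi 0) := by
    refine (hf.integrableOn (s := Ioi 0)).congr_fun (fun x hx => ?_) measurableSet_Ioi
    rw [abs_of_pos hx]
  have hIic : IntegrableOn (fun x => f |x|) (Iic 0) := by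
    rw [← Measure.map_neg_eq_self (volume : Measure ℝ)]
    have m : MeasurableEmbedding fun x : ℝ => -x := (Homeomorph.neg ℝ).measurableEmbedding
    rw [m.integrableOn_map_iff]
    simp_rw [Function.comp_def, abs_neg, neg_preimage, neg_Iic, neg_zero]
    exact Iff.mpr integrableOn_Ici_iff_integrableOn_Ioi hIoi
  have := hIic.union hIoi
  rwa [Iic_union_Ioi, integrableOn_univ] at this

lemma integrable_abs_rpow_gaussian (v : NNReal) {p : ℝ} (hp : 0 ≤ p) :
    Integrable (fun x => |x| ^ p) (gaussianReal 0 v) := by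
  by_cases hv : v = 0
  · rw [hv, gaussianReal_zero_var]
    exact (integrable_const _).congr (ae_eq_dirac _).symm
  · rw [gaussianReal_of_var_ne_zero _ hv,
      integrable_withDensity_iff_integrable_smul' (measurable_gaussianPDF _ _)
        (Eventually.of_forall fun x => ENNReal.ofReal_lt_top)]
    have heq : ∀ x : ℝ, (gaussianPDF 0 v x).toReal • |x| ^ p =
        (Real.sqrt (2 * π * v))⁻¹ * (|x| ^ p * Real.exp (-(2 * (v:ℝ))⁻¹ * x ^ 2)) := by
      intro x
      rw [gaussianPDF, ENNReal.toReal_ofReal (gaussianPDFReal_nonneg _ _ _), gaussianPDFReal]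
      rw [smul_eq_mul]
      ring_nf
    simp_rw [heq]
    refine Integrable.const_mul ?_ _
    have hv' : (0:ℝ) < (v:ℝ) := by positivity
    have hb : (0:ℝ) < (2 * (v:ℝ))⁻¹ := by positivity
    have := integrable_comp_abs (integrable_rpow_mul_exp_neg_mul_sq hb
      (lt_of_lt_of_le (by norm_num) hp))
    refine this.congr (Eventually.of_forall fun x => ?_)
    simp [sq_abs]

lemma integrable_sq_gaussian (v : NNReal) :
    Integrable (fun x => x ^ 2) (gaussianReal 0 v) := by
  refine (integrable_abs_rpow_gaussian v (p := 2) (by norm_num)).congr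
    (Eventually.of_forall fun x => ?_)
  show |x| ^ (2:ℝ) = x ^ 2
  rw [Real.rpow_two, sq_abs]

lemma moment_scale (v : NNReal) {p : ℝ} (hp : 0 < p) :
    ∫ x, |x| ^ p ∂(gaussianReal 0 v) =
      (v:ℝ) ^ (p/2) * ∫ x, |x| ^ p ∂(gaussianReal 0 1) := by
  have hcont : Continuous (fun x : ℝ => |x| ^ p) :=
    continuous_abs.rpow_const (fun x => Or.inr hp.le)
  by_cases hv : v = 0
  · rw [hv, gaussianReal_zero_var, integral_dirac]
    simp [Real.zero_rpow hp.ne', Real.zero_rpow (by positivity : p/2 ≠ 0)]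
  · have h := gaussianReal_map_const_mul (μ := 0) (v := 1) (Real.sqrt v)
    have hv2 : (NNReal.mk ((Real.sqrt v)^2) (sq_nonneg _)) * 1 = v := by
      ext
      simp [Real.sq_sqrt v.2]
    rw [hv2, mul_zero] at h
    rw [← h, integral_map (by fun_prop) hcont.aestronglyMeasurable]
    simp_rw [abs_mul, abs_of_nonneg (Real.sqrt_nonneg _),
      Real.mul_rpow (Real.sqrt_nonneg _) (abs_nonneg _)]
    rw [integral_const_mul]
    congr 1
    rw [Real.sqrt_eq_rpow, ← Real.rpow_mul (NNReal.coe_nonneg v)]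
    ring_nf

lemma second_moment_scale (v : NNReal) :
    ∫ x, x ^ 2 ∂(gaussianReal 0 v) = (v:ℝ) * ∫ x, x ^ 2 ∂(gaussianReal 0 1) := by
  have h2 : ∀ x : ℝ, |x| ^ (2:ℝ) = x ^ 2 := fun x => by
    rw [Real.rpow_two, sq_abs]
  have := moment_scale v (p := 2) (by norm_num)
  simp_rw [h2] at this
  simpa using this

lemma hasDerivAt_abs_rpow {q : ℝ} (hq : 0 < q) (u : ℝ) :
    HasDerivAt (fun x : ℝ => |x| ^ (q+1)) ((q+1) * (Real.sign u * |u| ^ q)) u := by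
  rcases lt_trichotomy u 0 with h | h | h
  · have h1 : HasDerivAt (fun x : ℝ => -x) (-1) u := (hasDerivAt_id u).neg
    have h2 := (Real.hasDerivAt_rpow_const (x := -u) (p := q+1)
      (Or.inl (by linarith))).comp u h1
    have h3 : HasDerivAt (fun x : ℝ => (-x) ^ (q+1))
        ((q+1) * (Real.sign u * |u| ^ q)) u := by
      refine h2.congr_deriv ?_
      rw [Real.sign_of_neg h, abs_of_neg h]
      simp [add_sub_cancel_right]
    refine h3.congr_of_eventuallyEq ?_
    filter_upwards [Iio_mem_nhds h] with x hx
    rw [abs_of_neg hx]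
  · subst h
    rw [Real.sign_zero]
    simp only [zero_mul, mul_zero]
    rw [hasDerivAt_iff_tendsto]
    have heq : ∀ x : ℝ, ‖x - 0‖⁻¹ * ‖|x| ^ (q+1) - |(0:ℝ)| ^ (q+1) - (x - 0) • (0:ℝ)‖
        = |x| ^ q := by
      intro x
      rw [abs_zero, Real.zero_rpow (by positivity)]
      simp only [sub_zero, smul_zero, sub_zero, Real.norm_eq_abs, norm_eq_abs]
      rw [abs_of_nonneg (Real.rpow_nonneg (abs_nonneg x) _)]
      rcases eq_or_ne x 0 with rfl | hx
      · simp [Real.zero_rpow hq.ne']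
      · rw [Real.rpow_add (abs_pos.mpr hx), Real.rpow_one]
        field_simp
    simp_rw [heq]
    have hc : ContinuousAt (fun y : ℝ => y ^ q) |(0:ℝ)| := by
      rw [abs_zero]
      exact Real.continuousAt_rpow_const 0 q (Or.inr hq.le)
    have := hc.comp (continuous_abs.continuousAt (x := (0:ℝ)))
    have h0 : (0:ℝ) ^ q = 0 := Real.zero_rpow hq.ne'
    simpa [Function.comp_def, h0] using this.tendsto
  · have h2 := Real.hasDerivAt_rpow_const (x := u) (p := q+1) (Or.inl (ne_of_gt h))
    have h3 : HasDerivAt (fun x : ℝ => x ^ (q+1))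
        ((q+1) * (Real.sign u * |u| ^ q)) u := by
      convert h2 using 1
      rw [Real.sign_of_pos h, abs_of_pos h]
      simp [add_sub_cancel_right]
    refine h3.congr_of_eventuallyEq ?_
    filter_upwards [Ioi_mem_nhds h] with x hx
    rw [abs_of_pos hx]

end GaussReg

open GaussReg Set

theorem gaussian_linear_regression {Ω : Type*} [MeasurableSpace Ω]
    (P : Measure Ω) [IsProbabilityMeasure P]
    (X Y : Ω → ℝ) (hX : Measurable X) (hY : Measurable Y)
    (hGauss : ∀ a b : ℝ, ∃ w : NNReal,
      Measure.map (fun ω => a * X ω + b * Y ω) P = gaussianReal 0 w)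
    (hVar : 0 < ∫ ω, (X ω) ^ 2 ∂P) (q : ℝ) (hq : 0 < q) :
    ∫ ω, Y ω * Real.sign (X ω) * |X ω| ^ q ∂P =
      ((∫ ω, X ω * Y ω ∂P) / (∫ ω, (X ω) ^ 2 ∂P)) * ∫ ω, |X ω| ^ (q + 1) ∂P := by
  classical
  -- laws of X + t Y
  have hwEx : ∀ t : ℝ, ∃ w : NNReal,
      Measure.map (fun ω => X ω + t * Y ω) P = gaussianReal 0 w := by
    intro t
    obtain ⟨w, hw⟩ := hGauss 1 t
    exact ⟨w, by simpa [one_mul] using hw⟩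
  choose w hw using hwEx
  have hZ : ∀ t : ℝ, Measurable (fun ω => X ω + t * Y ω) :=
    fun t => hX.add (hY.const_mul t)
  -- law of Y
  obtain ⟨wY, hwY⟩ : ∃ w : NNReal, Measure.map Y P = gaussianReal 0 w := by
    obtain ⟨w, hw⟩ := hGauss 0 1
    exact ⟨w, by simpa [zero_mul, one_mul] using hw⟩
  have hXmap : Measure.map X P = gaussianReal 0 (w 0) := by
    have := hw 0
    simpa [zero_mul, add_zero] using this
  -- moments of X + t Y
  have hmom_int : ∀ (t : ℝ) (p : ℝ), 0 < p →
      Integrable (fun ω => |X ω + t * Y ω| ^ p) P := by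
    intro t p hp
    have hcont : Continuous (fun x : ℝ => |x| ^ p) :=
      continuous_abs.rpow_const (fun x => Or.inr hp.le)
    have hint : Integrable (fun x => |x| ^ p)
        (Measure.map (fun ω => X ω + t * Y ω) P) := by
      rw [hw t]; exact integrable_abs_rpow_gaussian _ hp.le
    have := (integrable_map_measure hcont.aestronglyMeasurable
      (hZ t).aemeasurable).mp hint
    simpa [Function.comp_def] using this
  have hmom_eq : ∀ (t : ℝ) (p : ℝ), 0 < p →
      ∫ ω, |X ω + t * Y ω| ^ p ∂P =
        ((w t : ℝ)) ^ (p/2) * ∫ x, |x| ^ p ∂(gaussianReal 0 1) := by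
    intro t p hp
    have hcont : Continuous (fun x : ℝ => |x| ^ p) :=
      continuous_abs.rpow_const (fun x => Or.inr hp.le)
    have h1 : ∫ ω, |X ω + t * Y ω| ^ p ∂P
        = ∫ x, |x| ^ p ∂(Measure.map (fun ω => X ω + t * Y ω) P) :=
      (integral_map (hZ t).aemeasurable hcont.aestronglyMeasurable).symm
    rw [h1, hw t, moment_scale _ hp]
  -- second moments
  set m2 : ℝ := ∫ x, x ^ 2 ∂(gaussianReal 0 1) with hm2def
  have hsq_eq : ∀ t : ℝ, ∫ ω, (X ω + t * Y ω) ^ 2 ∂P = (w t : ℝ) * m2 := by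
    intro t
    have hcont : Continuous (fun x : ℝ => x ^ 2) := by continuity
    have h1 : ∫ ω, (X ω + t * Y ω) ^ 2 ∂P
        = ∫ x, x ^ 2 ∂(Measure.map (fun ω => X ω + t * Y ω) P) :=
      (integral_map (hZ t).aemeasurable hcont.aestronglyMeasurable).symm
    rw [h1, hw t, second_moment_scale]
  -- integrability of squares and product
  have hsq_int : ∀ (Z : Ω → ℝ), Measurable Z → ∀ v : NNReal,
      Measure.map Z P = gaussianReal 0 v → Integrable (fun ω => Z ω ^ 2) P := by
    intro Z hZm v hmap
    have hcont : Continuous (fun x : ℝ => x ^ 2) := by continuity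
    have hint : Integrable (fun x => x ^ 2) (Measure.map Z P) := by
      rw [hmap]; exact integrable_sq_gaussian v
    have := (integrable_map_measure hcont.aestronglyMeasurable hZm.aemeasurable).mp hint
    simpa [Function.comp_def] using this
  have hX2 : Integrable (fun ω => X ω ^ 2) P := hsq_int X hX _ hXmap
  have hY2 : Integrable (fun ω => Y ω ^ 2) P := hsq_int Y hY _ hwY
  have hXY : Integrable (fun ω => X ω * Y ω) P := by
    refine Integrable.mono' (hX2.add hY2) (hX.mul hY).aestronglyMeasurable
      (Filter.Eventually.of_forall fun ω => ?_)
    simp only [Pi.add_apply]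
    rw [Real.norm_eq_abs, abs_mul]
    nlinarith [sq_nonneg (|X ω| - |Y ω|), sq_abs (X ω), sq_abs (Y ω),
      abs_nonneg (X ω), abs_nonneg (Y ω), mul_nonneg (abs_nonneg (X ω)) (abs_nonneg (Y ω))]
  set a : ℝ := ∫ ω, X ω ^ 2 ∂P with hadef
  set C : ℝ := ∫ ω, X ω * Y ω ∂P with hCdef
  set b : ℝ := ∫ ω, Y ω ^ 2 ∂P with hbdef
  have hφ : ∀ t : ℝ, (w t : ℝ) * m2 = a + 2*C*t + b*t^2 := by
    intro t
    have hexp : (fun ω => (X ω + t * Y ω) ^ 2)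
        = fun ω => (X ω ^ 2 + (2*t) * (X ω * Y ω)) + t^2 * Y ω ^ 2 := by
      funext ω; ring
    have i2 : Integrable (fun ω => (2*t) * (X ω * Y ω)) P := hXY.const_mul _
    have i3 : Integrable (fun ω => t^2 * Y ω ^ 2) P := hY2.const_mul _
    have i1 : Integrable (fun ω => X ω ^ 2 + (2*t) * (X ω * Y ω)) P := hX2.add i2
    have h2 : ∫ ω, (X ω + t * Y ω) ^ 2 ∂P = a + 2*C*t + b*t^2 := by
      rw [hexp, integral_add i1 i3, integral_add hX2 i2, integral_const_mul,
        integral_const_mul]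
      ring
    rw [← h2, hsq_eq t]
  -- positivity
  have hm2_nonneg : 0 ≤ m2 := integral_nonneg fun x => sq_nonneg x
  have ha_pos : 0 < a := hVar
  have hw0 : (w 0 : ℝ) * m2 = a := by
    have := hφ 0; simpa using this
  have hm2_pos : 0 < m2 := by
    rcases hm2_nonneg.lt_or_eq with h | h
    · exact h
    · exfalso; rw [← h, mul_zero] at hw0; exact absurd hw0.symm (ne_of_gt ha_pos)
  -- the function h
  set K : ℝ := ∫ x, |x| ^ (q+1) ∂(gaussianReal 0 1) with hKdef
  set K' : ℝ := K / m2 ^ ((q+1)/2) with hK'def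
  have hq1 : (0:ℝ) < q + 1 := by linarith
  have hφnn : ∀ t : ℝ, 0 ≤ a + 2*C*t + b*t^2 := by
    intro t
    rw [← hφ t]
    positivity
  have hgh : ∀ t : ℝ, ∫ ω, |X ω + t * Y ω| ^ (q+1) ∂P
      = (a + 2*C*t + b*t^2) ^ ((q+1)/2) * K' := by
    intro t
    rw [hmom_eq t _ hq1]
    have hwt : (w t : ℝ) = (a + 2*C*t + b*t^2) / m2 := by
      rw [eq_div_iff hm2_pos.ne']
      exact hφ t
    rw [hwt, Real.div_rpow (hφnn t) hm2_pos.le, hK'def, hKdef]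
    ring
  -- derivative of h at 0
  have hφd : HasDerivAt (fun t : ℝ => a + 2*C*t + b*t^2) (2*C) 0 := by
    have h1 := ((hasDerivAt_const (0:ℝ) a).add
      ((hasDerivAt_id' (x := (0:ℝ))).const_mul (2*C))).add
      ((hasDerivAt_pow 2 (0:ℝ)).const_mul b)
    refine h1.congr_deriv ?_
    norm_num
  have hhd : HasDerivAt (fun t : ℝ => (a + 2*C*t + b*t^2) ^ ((q+1)/2) * K')
      ((2*C * ((q+1)/2) * a ^ ((q+1)/2 - 1)) * K') 0 := by
    have h1 := (hφd.rpow_const (p := (q+1)/2) (Or.inl (by simpa using ha_pos.ne')))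
    have h2 := h1.mul_const K'
    refine h2.congr_deriv ?_; simp
  -- derivative of g at 0 via dominated convergence
  set F : ℝ → Ω → ℝ := fun t ω => |X ω + t * Y ω| ^ (q+1) with hFdef
  set F' : ℝ → Ω → ℝ := fun t ω =>
    ((q+1) * (Real.sign (X ω + t * Y ω) * |X ω + t * Y ω| ^ q)) * Y ω with hF'def
  set bound : Ω → ℝ := fun ω => (q+1) * 2 ^ q * (|X ω| ^ (q+1) + |Y ω| ^ (q+1))
    with hbounddef
  have hcontq1 : Continuous (fun x : ℝ => |x| ^ (q+1)) :=
    continuous_abs.rpow_const (fun x => Or.inr hq1.le)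
  have hcontq : Continuous (fun x : ℝ => |x| ^ q) :=
    continuous_abs.rpow_const (fun x => Or.inr hq.le)
  have hF_meas : ∀ᶠ t in nhds (0:ℝ), AEStronglyMeasurable (F t) P :=
    Filter.Eventually.of_forall fun t =>
      (hcontq1.measurable.comp (hZ t)).aestronglyMeasurable
  have hF_int : Integrable (F 0) P := hmom_int 0 _ hq1
  have hF'_meas : AEStronglyMeasurable (F' 0) P := by
    refine Measurable.aestronglyMeasurable ?_
    exact (((measurable_rsign.comp (hZ 0)).mul
      (hcontq.measurable.comp (hZ 0))).const_mul _).mul hY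
  have h_bound : ∀ᵐ ω ∂P, ∀ t ∈ Metric.ball (0:ℝ) 1, ‖F' t ω‖ ≤ bound ω := by
    refine Filter.Eventually.of_forall fun ω => fun t ht => ?_
    have htabs : |t| ≤ 1 := by
      rw [Metric.mem_ball, Real.dist_eq, sub_zero] at ht
      exact ht.le
    set M : ℝ := max |X ω| |Y ω| with hMdef
    have hM0 : 0 ≤ M := le_trans (abs_nonneg _) (le_max_left _ _)
    have hZle : |X ω + t * Y ω| ≤ 2 * M := by
      calc |X ω + t * Y ω| ≤ |X ω| + |t * Y ω| := abs_add_le _ _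
        _ ≤ |X ω| + |Y ω| := by
            rw [abs_mul]
            have := mul_le_of_le_one_left (abs_nonneg (Y ω)) htabs
            linarith
        _ ≤ 2 * M := by
            have h1 : |X ω| ≤ M := le_max_left _ _
            have h2 : |Y ω| ≤ M := le_max_right _ _
            linarith
    have hsgn : |Real.sign (X ω + t * Y ω)| ≤ 1 := abs_rsign_le _
    have hnorm : ‖F' t ω‖
        ≤ (q+1) * (|X ω + t * Y ω| ^ q * |Y ω|) := by
      rw [hF'def]
      simp only [Real.norm_eq_abs]
      rw [abs_mul, abs_mul, abs_mul]
      rw [abs_of_nonneg hq1.le, abs_of_nonneg (Real.rpow_nonneg (abs_nonneg _) q)]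
      have h1 : |Real.sign (X ω + t * Y ω)| * |X ω + t * Y ω| ^ q
          ≤ |X ω + t * Y ω| ^ q :=
        mul_le_of_le_one_left (Real.rpow_nonneg (abs_nonneg _) q) hsgn
      have h2 : (q+1) * (|Real.sign (X ω + t * Y ω)| * |X ω + t * Y ω| ^ q) * |Y ω|
          ≤ (q+1) * |X ω + t * Y ω| ^ q * |Y ω| :=
        mul_le_mul_of_nonneg_right (mul_le_mul_of_nonneg_left h1 hq1.le) (abs_nonneg _)
      exact h2.trans_eq (mul_assoc _ _ _)
    have hZq : |X ω + t * Y ω| ^ q ≤ 2 ^ q * M ^ q := by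
      calc |X ω + t * Y ω| ^ q ≤ (2 * M) ^ q :=
            Real.rpow_le_rpow (abs_nonneg _) hZle hq.le
        _ = 2 ^ q * M ^ q := Real.mul_rpow (by norm_num) hM0
    have hYM : |Y ω| ≤ M := le_max_right _ _
    have hMq1 : M ^ q * M = M ^ (q + 1) := by
      rw [Real.rpow_add' hM0 (by linarith), Real.rpow_one]
    have hMle : M ^ (q+1) ≤ |X ω| ^ (q+1) + |Y ω| ^ (q+1) := by
      rcases max_cases |X ω| |Y ω| with ⟨hm, _⟩ | ⟨hm, _⟩ <;> rw [hMdef, hm]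
      · nlinarith [Real.rpow_nonneg (abs_nonneg (Y ω)) (q+1)]
      · nlinarith [Real.rpow_nonneg (abs_nonneg (X ω)) (q+1)]
    calc ‖F' t ω‖ ≤ (q+1) * (|X ω + t * Y ω| ^ q * |Y ω|) := hnorm
      _ ≤ (q+1) * (2 ^ q * M ^ q * M) := by
          have h1 : |X ω + t * Y ω| ^ q * |Y ω| ≤ 2 ^ q * M ^ q * M :=
            mul_le_mul hZq hYM (abs_nonneg _) (by positivity)
          exact mul_le_mul_of_nonneg_left h1 hq1.le
      _ = (q+1) * 2 ^ q * M ^ (q+1) := by rw [mul_assoc, hMq1]; ring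
      _ ≤ bound ω := by
          rw [hbounddef]
          exact mul_le_mul_of_nonneg_left hMle (by positivity)
  have hbound_int : Integrable bound P := by
    have h1 : Integrable (fun ω => |X ω| ^ (q+1)) P := by
      have := hmom_int 0 _ hq1
      simpa using this
    have h2 : Integrable (fun ω => |Y ω| ^ (q+1)) P := by
      have hint : Integrable (fun x => |x| ^ (q+1)) (Measure.map Y P) := by
        rw [hwY]; exact integrable_abs_rpow_gaussian _ hq1.le
      have := (integrable_map_measure hcontq1.aestronglyMeasurable
        hY.aemeasurable).mp hint
      simpa [Function.comp_def] using this
    exact ((h1.add h2).const_mul _)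
  have h_diff : ∀ᵐ ω ∂P, ∀ t ∈ Metric.ball (0:ℝ) 1,
      HasDerivAt (fun t => F t ω) (F' t ω) t := by
    refine Filter.Eventually.of_forall fun ω t _ => ?_
    have hin : HasDerivAt (fun t : ℝ => X ω + t * Y ω) (Y ω) t := by
      simpa using (hasDerivAt_mul_const (Y ω) (x := t)).const_add (X ω)
    exact (hasDerivAt_abs_rpow hq (X ω + t * Y ω)).comp t hin
  have hDer := hasDerivAt_integral_of_dominated_loc_of_deriv_le
    (F := F) (F' := F') (bound := bound) (μ := P) (x₀ := (0:ℝ)) (s := Metric.ball (0:ℝ) 1)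
    (Metric.ball_mem_nhds _ one_pos) hF_meas hF_int hF'_meas h_bound hbound_int h_diff
  have hgd : HasDerivAt (fun t => ∫ ω, F t ω ∂P) (∫ ω, F' 0 ω ∂P) 0 := hDer.2
  -- identify the two derivatives
  have hGfun : (fun t => ∫ ω, F t ω ∂P)
      = fun t : ℝ => (a + 2*C*t + b*t^2) ^ ((q+1)/2) * K' := by
    funext t
    exact hgh t
  rw [hGfun] at hgd
  have hD_eq : ∫ ω, F' 0 ω ∂P = (2*C * ((q+1)/2) * a ^ ((q+1)/2 - 1)) * K' :=
    hgd.unique hhd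
  -- compute ∫ F' 0
  set I : ℝ := ∫ ω, Y ω * Real.sign (X ω) * |X ω| ^ q ∂P with hIdef
  have hF'0 : ∫ ω, F' 0 ω ∂P = (q+1) * I := by
    have hfun : (fun ω => F' 0 ω)
        = fun ω => (q+1) * (Y ω * Real.sign (X ω) * |X ω| ^ q) := by
      funext ω
      rw [hF'def]
      simp only [zero_mul, add_zero]
      ring
    rw [hfun, integral_const_mul, hIdef]
  -- conclude I
  have hI : I = C * a ^ ((q+1)/2 - 1) * K' := by
    have h1 : (q+1) * I = (q+1) * (C * a ^ ((q+1)/2 - 1) * K') := by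
      rw [← hF'0, hD_eq]; ring
    exact mul_left_cancel₀ (by positivity : (q:ℝ)+1 ≠ 0) h1
  -- compute ∫ |X|^{q+1}
  have hXq1 : ∫ ω, |X ω| ^ (q+1) ∂P = a ^ ((q+1)/2) * K' := by
    have := hgh 0
    simpa using this
  show I = C / a * ∫ ω, |X ω| ^ (q + 1) ∂P
  rw [hXq1, hI]
  rw [show (q+1)/2 - 1 = (q+1)/2 - 1 from rfl, Real.rpow_sub ha_pos, Real.rpow_one]
  field_simp
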